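/- Log-Sobolev inequality on the discrete cube with constant 4: for any f : {-1,1}ⁿ → ℝ₊ with ∫ f dμ = 1 (μ uniform), H_μ(f) ≤ 4 Σ_{i=1}ⁿ ∫ (∂_i √f)² dμ. -/

import Mathlib

open Finset Function

namespace LSC

variable {n : ℕ}

noncomputable def avgOp (i : Fin n) (g : (Fin n → Bool) → ℝ) : (Fin n → Bool) → ℝ :=
  fun x => (g (update x i true) + g (update x i false)) / 2

noncomputable def Di (i : Fin n) (g : (Fin n → Bool) → ℝ) : ℝ :=
  ∑ x : Fin n → Bool,
    (Real.sqrt (g (update x i true)) - Real.sqrt (g (update x i false))) ^ 2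

lemma sum_avgOp (i : Fin n) (g : (Fin n → Bool) → ℝ) :
    ∑ x : Fin n → Bool, avgOp i g x = ∑ x : Fin n → Bool, g x := by
  have inv : Function.Involutive (fun x : Fin n → Bool => update x i (!x i)) := by
    intro x; funext j
    rcases eq_or_ne j i with rfl | h
    · simp
    · simp [update_of_ne h]
  have h1 : ∑ x : Fin n → Bool, g (update x i (!x i)) = ∑ x : Fin n → Bool, g x :=
    Fintype.sum_bijective _ inv.bijective _ _ (fun x => rfl)
  have h2 : ∀ x : Fin n → Bool,
      g (update x i true) + g (update x i false) = g x + g (update x i (!x i)) := by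
    intro x
    cases hx : x i with
    | false =>
        have hup : update x i false = x := by rw [← hx]; exact update_eq_self i x
        rw [hup]; simp only [Bool.not_false]; all_goals ring
    | true =>
        have hup : update x i true = x := by rw [← hx]; exact update_eq_self i x
        rw [hup]; simp only [Bool.not_true]; all_goals ring
  calc ∑ x : Fin n → Bool, avgOp i g x
      = (∑ x : Fin n → Bool, (g x + g (update x i (!x i)))) / 2 := by
        rw [Finset.sum_div]
        exact Finset.sum_congr rfl (fun x _ => by simp only [avgOp, h2])
    _ = ∑ x : Fin n → Bool, g x := by
        rw [Finset.sum_add_distrib, h1]; ring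

lemma avgOp_pos {g : (Fin n → Bool) → ℝ} (i : Fin n) (hg : ∀ x, 0 < g x) :
    ∀ x, 0 < avgOp i g x := by
  intro x; exact div_pos (add_pos (hg _) (hg _)) two_pos

lemma avgOp_nonneg {g : (Fin n → Bool) → ℝ} (i : Fin n) (hg : ∀ x, 0 ≤ g x) :
    ∀ x, 0 ≤ avgOp i g x := by
  intro x; exact div_nonneg (add_nonneg (hg _) (hg _)) two_pos.le

/-- Two-point entropy inequality with constant 1 relative to `(√a-√b)²`. -/
lemma two_point {a b : ℝ} (ha : 0 < a) (hb : 0 < b) :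
    (a * Real.log a + b * Real.log b) / 2 - ((a + b) / 2) * Real.log ((a + b) / 2)
      ≤ (Real.sqrt a - Real.sqrt b) ^ 2 := by
  set m := (a + b) / 2 with hm
  have hmpos : 0 < m := by positivity
  have hla : Real.log a - Real.log m ≤ (a - m) / m := by
    have h := Real.log_le_sub_one_of_pos (show 0 < a / m by positivity)
    rw [Real.log_div ha.ne' hmpos.ne'] at h
    have : a / m - 1 = (a - m) / m := by field_simp
    linarith [this ▸ h]
  have hlb : Real.log b - Real.log m ≤ (b - m) / m := by
    have h := Real.log_le_sub_one_of_pos (show 0 < b / m by positivity)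
    rw [Real.log_div hb.ne' hmpos.ne'] at h
    have : b / m - 1 = (b - m) / m := by field_simp
    linarith [this ▸ h]
  have key : (a * Real.log a + b * Real.log b) / 2 - m * Real.log m
      ≤ (a - b) ^ 2 / (4 * m) := by
    have h1 : a * (Real.log a - Real.log m) ≤ a * ((a - m) / m) :=
      mul_le_mul_of_nonneg_left hla ha.le
    have h2 : b * (Real.log b - Real.log m) ≤ b * ((b - m) / m) :=
      mul_le_mul_of_nonneg_left hlb hb.le
    have expand : (a * Real.log a + b * Real.log b) / 2 - m * Real.log m
        = (a * (Real.log a - Real.log m) + b * (Real.log b - Real.log m)) / 2 := by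
      rw [hm]; ring
    have hval : (a * ((a - m) / m) + b * ((b - m) / m)) / 2 = (a - b) ^ 2 / (4 * m) := by
      rw [hm]; field_simp; ring
    rw [expand]
    calc (a * (Real.log a - Real.log m) + b * (Real.log b - Real.log m)) / 2
        ≤ (a * ((a - m) / m) + b * ((b - m) / m)) / 2 := by linarith
      _ = (a - b) ^ 2 / (4 * m) := hval
  have h3 : (a - b) ^ 2 / (4 * m) ≤ (Real.sqrt a - Real.sqrt b) ^ 2 := by
    rw [div_le_iff₀ (by positivity)]
    have hua : Real.sqrt a ^ 2 = a := Real.sq_sqrt ha.le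
    have hub : Real.sqrt b ^ 2 = b := Real.sq_sqrt hb.le
    have h4m : 4 * m = 2 * (a + b) := by rw [hm]; ring
    rw [h4m]
    nlinarith [sq_nonneg ((Real.sqrt a - Real.sqrt b) ^ 2),
      sq_nonneg (Real.sqrt a - Real.sqrt b), sq_nonneg (Real.sqrt a + Real.sqrt b),
      Real.sqrt_nonneg a, Real.sqrt_nonneg b]
  linarith

lemma entropy_step (i : Fin n) (g : (Fin n → Bool) → ℝ) (hg : ∀ x, 0 < g x) :
    ∑ x : Fin n → Bool, g x * Real.log (g x)
      - ∑ x : Fin n → Bool, avgOp i g x * Real.log (avgOp i g x) ≤ Di i g := by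
  have h := sum_avgOp i (fun x => g x * Real.log (g x))
  rw [← h, Di, ← Finset.sum_sub_distrib]
  apply Finset.sum_le_sum
  intro x _
  simpa [avgOp] using two_point (hg (update x i true)) (hg (update x i false))

/-- Cauchy–Schwarz step: the square-root gradient term is contracted by averaging. -/
lemma sqrt_avg {a₁ a₂ b₁ b₂ : ℝ} (ha₁ : 0 ≤ a₁) (ha₂ : 0 ≤ a₂)
    (hb₁ : 0 ≤ b₁) (hb₂ : 0 ≤ b₂) :
    (Real.sqrt ((a₁ + a₂) / 2) - Real.sqrt ((b₁ + b₂) / 2)) ^ 2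
      ≤ ((Real.sqrt a₁ - Real.sqrt b₁) ^ 2 + (Real.sqrt a₂ - Real.sqrt b₂) ^ 2) / 2 := by
  have hA : (0:ℝ) ≤ (a₁ + a₂) / 2 := by positivity
  have hB : (0:ℝ) ≤ (b₁ + b₂) / 2 := by positivity
  have key : Real.sqrt a₁ * Real.sqrt b₁ + Real.sqrt a₂ * Real.sqrt b₂
      ≤ 2 * (Real.sqrt ((a₁ + a₂) / 2) * Real.sqrt ((b₁ + b₂) / 2)) := by
    have hprod : Real.sqrt ((a₁ + a₂) / 2) * Real.sqrt ((b₁ + b₂) / 2)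
        = Real.sqrt ((a₁ + a₂) * (b₁ + b₂)) / 2 := by
      rw [← Real.sqrt_mul hA]
      rw [show (a₁ + a₂) / 2 * ((b₁ + b₂) / 2) = ((a₁ + a₂) * (b₁ + b₂)) / 4 by ring]
      rw [show ((a₁ + a₂) * (b₁ + b₂)) / 4 = ((a₁ + a₂) * (b₁ + b₂)) * (4⁻¹ : ℝ) by ring]
      rw [Real.sqrt_mul (by positivity), show ((4:ℝ)⁻¹) = (2⁻¹:ℝ)^2 by norm_num,
        Real.sqrt_sq (by norm_num)]
      ring
    rw [hprod]
    rw [show 2 * (Real.sqrt ((a₁ + a₂) * (b₁ + b₂)) / 2) = Real.sqrt ((a₁ + a₂) * (b₁ + b₂)) by ring]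
    rw [show Real.sqrt a₁ * Real.sqrt b₁ = Real.sqrt (a₁ * b₁) by rw [Real.sqrt_mul ha₁]]
    rw [show Real.sqrt a₂ * Real.sqrt b₂ = Real.sqrt (a₂ * b₂) by rw [Real.sqrt_mul ha₂]]
    rw [Real.le_sqrt (by positivity) (mul_nonneg (by linarith) (by linarith))]
    have hs1 : Real.sqrt (a₁ * b₁) ^ 2 = a₁ * b₁ := Real.sq_sqrt (by positivity)
    have hs2 : Real.sqrt (a₂ * b₂) ^ 2 = a₂ * b₂ := Real.sq_sqrt (by positivity)
    have hcross : 2 * (Real.sqrt (a₁ * b₁) * Real.sqrt (a₂ * b₂)) ≤ a₁ * b₂ + a₂ * b₁ := by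
      have := Real.sqrt_mul_self (mul_nonneg ha₁ hb₁)
      have hgm : Real.sqrt (a₁ * b₁) * Real.sqrt (a₂ * b₂)
          = Real.sqrt (a₁ * b₂) * Real.sqrt (a₂ * b₁) := by
        rw [← Real.sqrt_mul (by positivity), ← Real.sqrt_mul (by positivity)]
        ring_nf
      rw [hgm]
      have h1 : Real.sqrt (a₁ * b₂) ^ 2 = a₁ * b₂ := Real.sq_sqrt (by positivity)
      have h2 : Real.sqrt (a₂ * b₁) ^ 2 = a₂ * b₁ := Real.sq_sqrt (by positivity)
      nlinarith [sq_nonneg (Real.sqrt (a₁ * b₂) - Real.sqrt (a₂ * b₁))]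
    nlinarith [Real.sqrt_nonneg (a₁ * b₁), Real.sqrt_nonneg (a₂ * b₂)]
  have hsA : Real.sqrt ((a₁ + a₂) / 2) ^ 2 = (a₁ + a₂) / 2 := Real.sq_sqrt hA
  have hsB : Real.sqrt ((b₁ + b₂) / 2) ^ 2 = (b₁ + b₂) / 2 := Real.sq_sqrt hB
  have hs1 : Real.sqrt a₁ ^ 2 = a₁ := Real.sq_sqrt ha₁
  have hs2 : Real.sqrt a₂ ^ 2 = a₂ := Real.sq_sqrt ha₂
  have hs3 : Real.sqrt b₁ ^ 2 = b₁ := Real.sq_sqrt hb₁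
  have hs4 : Real.sqrt b₂ ^ 2 = b₂ := Real.sq_sqrt hb₂
  nlinarith [key]

lemma Di_avgOp {i j : Fin n} (hij : i ≠ j) (g : (Fin n → Bool) → ℝ)
    (hg : ∀ x, 0 ≤ g x) : Di i (avgOp j g) ≤ Di i g := by
  have h := sum_avgOp j
    (fun y => (Real.sqrt (g (update y i true)) - Real.sqrt (g (update y i false))) ^ 2)
  simp only [Di]
  rw [← h]
  apply Finset.sum_le_sum
  intro x _
  simp only [avgOp, Function.update_comm hij]
  exact sqrt_avg (hg _) (hg _) (hg _) (hg _)

noncomputable def AL : List (Fin n) → ((Fin n → Bool) → ℝ) → ((Fin n → Bool) → ℝ)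
  | [], g => g
  | i :: l, g => avgOp i (AL l g)

lemma AL_pos (l : List (Fin n)) (g : (Fin n → Bool) → ℝ) (hg : ∀ x, 0 < g x) :
    ∀ x, 0 < AL l g x := by
  induction l with
  | nil => exact hg
  | cons i l ih => exact avgOp_pos i ih

lemma sum_AL (l : List (Fin n)) (g : (Fin n → Bool) → ℝ) :
    ∑ x : Fin n → Bool, AL l g x = ∑ x : Fin n → Bool, g x := by
  induction l with
  | nil => rfl
  | cons i l ih => rw [AL, sum_avgOp, ih]

lemma AL_nonneg (l : List (Fin n)) (g : (Fin n → Bool) → ℝ) (hg : ∀ x, 0 ≤ g x) :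
    ∀ x, 0 ≤ AL l g x := by
  induction l with
  | nil => exact hg
  | cons i l ih => exact avgOp_nonneg i ih

lemma Di_AL {i : Fin n} (l : List (Fin n)) (hi : i ∉ l) (g : (Fin n → Bool) → ℝ)
    (hg : ∀ x, 0 ≤ g x) : Di i (AL l g) ≤ Di i g := by
  induction l with
  | nil => exact le_rfl
  | cons j l ih =>
      have hij : i ≠ j := fun h => hi (by rw [h]; exact List.mem_cons_self)
      have hil : i ∉ l := fun h => hi (List.mem_cons_of_mem j h)
      calc Di i (AL (j :: l) g) = Di i (avgOp j (AL l g)) := rfl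
        _ ≤ Di i (AL l g) := Di_avgOp hij _ (AL_nonneg l g hg)
        _ ≤ Di i g := ih hil

lemma AL_indep (l : List (Fin n)) (g : (Fin n → Bool) → ℝ) :
    ∀ x y : Fin n → Bool, (∀ j, j ∉ l → x j = y j) → AL l g x = AL l g y := by
  induction l with
  | nil =>
      intro x y hxy
      have : x = y := funext (fun j => hxy j List.not_mem_nil)
      rw [this]
  | cons i l ih =>
      intro x y hxy
      simp only [AL, avgOp]
      have h1 : AL l g (update x i true) = AL l g (update y i true) := by
        apply ih
        intro j hj
        rcases eq_or_ne j i with rfl | hne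
        · simp
        · rw [update_of_ne hne, update_of_ne hne]
          exact hxy j (fun hmem => hj (by
            rcases List.mem_cons.mp hmem with h | h
            · exact absurd h hne
            · exact h))
      have h2 : AL l g (update x i false) = AL l g (update y i false) := by
        apply ih
        intro j hj
        rcases eq_or_ne j i with rfl | hne
        · simp
        · rw [update_of_ne hne, update_of_ne hne]
          exact hxy j (fun hmem => hj (by
            rcases List.mem_cons.mp hmem with h | h
            · exact absurd h hne
            · exact h))
      rw [h1, h2]

lemma ent_main (l : List (Fin n)) (hnd : l.Nodup) (g : (Fin n → Bool) → ℝ)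
    (hg : ∀ x, 0 < g x) :
    ∑ x : Fin n → Bool, g x * Real.log (g x)
      - ∑ x : Fin n → Bool, AL l g x * Real.log (AL l g x)
      ≤ (l.map (fun i => Di i g)).sum := by
  induction l with
  | nil => simp [AL]
  | cons i l ih =>
      have hnd' : l.Nodup := (List.nodup_cons.mp hnd).2
      have hi : i ∉ l := (List.nodup_cons.mp hnd).1
      have h1 := ih hnd'
      have h2 := entropy_step i (AL l g) (AL_pos l g hg)
      have h3 := Di_AL l hi g (fun x => (hg x).le)
      simp only [List.map_cons, List.sum_cons]
      have : AL (i :: l) g = avgOp i (AL l g) := rfl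
      rw [this]
      linarith

theorem main_list (g : (Fin n → Bool) → ℝ) (hg : ∀ x, 0 < g x)
    (hmean : ∑ x : Fin n → Bool, g x = 2 ^ n) :
    ∑ x : Fin n → Bool, g x * Real.log (g x) ≤ ∑ i : Fin n, Di i g := by
  set l : List (Fin n) := List.finRange n with hl
  have hmain := ent_main l (List.nodup_finRange n) g hg
  -- AL l g is constant equal to 1
  have hconst : ∀ x y : Fin n → Bool, AL l g x = AL l g y := by
    intro x y
    exact AL_indep l g x y (fun j hj => absurd (List.mem_finRange j) hj)
  have hcard : (Fintype.card (Fin n → Bool) : ℝ) = 2 ^ n := by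
    simp [Fintype.card_fun]
  have hone : ∀ x, AL l g x = 1 := by
    intro x
    have hsum : ∑ y : Fin n → Bool, AL l g y = 2 ^ n := by rw [sum_AL]; exact hmean
    have hsum2 : ∑ y : Fin n → Bool, AL l g y = (2 ^ n : ℝ) * AL l g x := by
      rw [Finset.sum_congr rfl (fun y _ => hconst y x), Finset.sum_const,
        Finset.card_univ, nsmul_eq_mul, hcard]
    have h2n : (2 ^ n : ℝ) ≠ 0 := by positivity
    have := hsum2.symm.trans hsum
    field_simp at this
    linarith [this]
  have hzero : ∑ x : Fin n → Bool, AL l g x * Real.log (AL l g x) = 0 := by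
    apply Finset.sum_eq_zero
    intro x _
    rw [hone x]; simp
  rw [hzero, sub_zero] at hmain
  calc ∑ x : Fin n → Bool, g x * Real.log (g x)
      ≤ (l.map (fun i => Di i g)).sum := hmain
    _ = ∑ i : Fin n, Di i g := by rw [hl, ← Fin.sum_univ_def]

end LSC


open Finset

/-- Log-Sobolev inequality on the discrete cube `{-1,1}ⁿ` with constant 4 (coordinates
encoded by `Bool`): for strictly positive `f` with mean 1 under the uniform measure,
`∫ f log f dμ ≤ 4 Σᵢ ∫ (∂ᵢ √f)² dμ`. -/
theorem log_sobolev_cube_four (n : ℕ) (f : (Fin n → Bool) → ℝ)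
    (hpos : ∀ x, 0 < f x)
    (hmean : (∑ x : Fin n → Bool, f x) / 2 ^ n = 1) :
    (∑ x : Fin n → Bool, f x * Real.log (f x)) / 2 ^ n ≤
      4 * ∑ i : Fin n, (∑ x : Fin n → Bool,
        ((Real.sqrt (f (Function.update x i true)) -
          Real.sqrt (f (Function.update x i false))) / 2) ^ 2) / 2 ^ n := by
  have h2n : (0:ℝ) < 2 ^ n := by positivity
  have hmean' : ∑ x : Fin n → Bool, f x = 2 ^ n := by
    field_simp at hmean; linarith [hmean]
  have hmain := LSC.main_list f hpos hmean'
  have hinner : ∀ i : Fin n, (∑ x : Fin n → Bool,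
        ((Real.sqrt (f (Function.update x i true)) -
          Real.sqrt (f (Function.update x i false))) / 2) ^ 2) = LSC.Di i f / 4 := by
    intro i
    rw [LSC.Di, Finset.sum_div]
    exact Finset.sum_congr rfl (fun x _ => by ring)
  have hRHS : 4 * ∑ i : Fin n, (∑ x : Fin n → Bool,
        ((Real.sqrt (f (Function.update x i true)) -
          Real.sqrt (f (Function.update x i false))) / 2) ^ 2) / 2 ^ n
      = (∑ i : Fin n, LSC.Di i f) / 2 ^ n := by
    calc 4 * ∑ i : Fin n, (∑ x : Fin n → Bool,
        ((Real.sqrt (f (Function.update x i true)) -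
          Real.sqrt (f (Function.update x i false))) / 2) ^ 2) / 2 ^ n
        = 4 * ∑ i : Fin n, LSC.Di i f / 4 / 2 ^ n := by
          congr 1
          exact Finset.sum_congr rfl (fun i _ => by rw [hinner i])
      _ = (∑ i : Fin n, LSC.Di i f) / 2 ^ n := by
          rw [Finset.mul_sum, Finset.sum_div]
          exact Finset.sum_congr rfl (fun i _ => by ring)
  rw [hRHS]
  gcongr
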